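/- Let TR₁>0, α₁∈(0,π), φ₁∈ℝ, M_e=(0,0,1)ᵀ, and let M₀=−M_e (or M₀=M_e). Consider the first step of the IR-bSSFP discrete Bloch dynamics, M₁(θ) = E₁(TR₁,θ)R_{φ₁}R_x(α₁)R_{φ₁}ᵀM₀ + E₂(TR₁,θ)M_e, as a map from (0,∞)² to ℝ³. Then M₁ is injective: for θᵃ=(T₁ᵃ,T₂ᵃ) and θᵇ=(T₁ᵇ,T₂ᵇ) in (0,∞)², M₁(θᵃ)=M₁(θᵇ) implies θᵃ=θᵇ. Consequently, for any L≥1, flip angles {α_ℓ}⊂(0,π) and repetition times {TR_ℓ>0}, the map θ ↦ (M_1(θ),…,M_L(θ)) is injective on (0,∞)². -/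

import Mathlib

open Matrix

/-- The equilibrium magnetization `M_e = (0,0,1)`. -/
noncomputable def Me : Fin 3 → ℝ := ![0, 0, 1]

/-- `E₁(TR,θ) = diag(e^{−TR/T₂}, e^{−TR/T₂}, e^{−TR/T₁})`. -/
noncomputable def E1 (TR T1 T2 : ℝ) : Matrix (Fin 3) (Fin 3) ℝ :=
  Matrix.diagonal ![Real.exp (-TR / T2), Real.exp (-TR / T2), Real.exp (-TR / T1)]

/-- `E₂(TR,θ) = 1 − e^{−TR/T₁}`. -/
noncomputable def E2 (TR T1 : ℝ) : ℝ := 1 - Real.exp (-TR / T1)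

/-- The phase-shift rotation `R_φ`. -/
noncomputable def Rphi (φ : ℝ) : Matrix (Fin 3) (Fin 3) ℝ :=
  !![Real.cos φ, Real.sin φ, 0; -Real.sin φ, Real.cos φ, 0; 0, 0, 1]

/-- The flip-angle rotation `R_x(α)`. -/
noncomputable def Rx (α : ℝ) : Matrix (Fin 3) (Fin 3) ℝ :=
  !![1, 0, 0; 0, Real.cos α, Real.sin α; 0, -Real.sin α, Real.cos α]

/-- `R(α) := R_φ R_x(α) R_φᵀ`. -/
noncomputable def Rmat (φ α : ℝ) : Matrix (Fin 3) (Fin 3) ℝ := Rphi φ * Rx α * (Rphi φ)ᵀ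

/-- The IR-bSSFP discrete Bloch dynamics:
`M₀` given, `M_ℓ = E₁(TR_ℓ,θ) R(α_ℓ) M_{ℓ−1} + E₂(TR_ℓ,θ) M_e`. -/
noncomputable def Mseq (α φ TR : ℕ → ℝ) (T1 T2 : ℝ) (M0 : Fin 3 → ℝ) : ℕ → Fin 3 → ℝ
  | 0 => M0
  | ℓ + 1 =>
      (E1 (TR (ℓ + 1)) T1 T2 * Rmat (φ (ℓ + 1)) (α (ℓ + 1))) *ᵥ Mseq α φ TR T1 T2 M0 ℓ
        + E2 (TR (ℓ + 1)) T1 • Me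


lemma Mseq1_apply (TR α φ : ℕ → ℝ) (T1 T2 s : ℝ) :
    (Mseq α φ TR T1 T2 (s • Me) 1 0 = s * Real.exp (-TR 1 / T2) * Real.sin (φ 1) * Real.sin (α 1))
    ∧ (Mseq α φ TR T1 T2 (s • Me) 1 1 = s * Real.exp (-TR 1 / T2) * Real.cos (φ 1) * Real.sin (α 1))
    ∧ (Mseq α φ TR T1 T2 (s • Me) 1 2 = s * Real.exp (-TR 1 / T1) * Real.cos (α 1) + (1 - Real.exp (-TR 1 / T1))) := by
  refine ⟨?_, ?_, ?_⟩ <;>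
  · simp [Mseq, E1, E2, Rmat, Rphi, Rx, Me, Matrix.mul_apply, Matrix.mulVec, dotProduct,
      Fin.sum_univ_three, Matrix.diagonal, Matrix.transpose_apply, Matrix.vecHead, Matrix.vecTail, Matrix.vecMul]
    ring

/-- Injectivity of the first IR-bSSFP step `θ ↦ M₁(θ)` on `(0,∞)²` for `M₀ = ±M_e` and
`α₁ ∈ (0,π)`, and consequently injectivity of the full map `θ ↦ (M₁(θ),…,M_L(θ))`. -/
theorem stmt9 (TR α φ : ℕ → ℝ) (hTR : ∀ ℓ, 0 < TR ℓ)
    (hα : ∀ ℓ, α ℓ ∈ Set.Ioo 0 Real.pi)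
    (M0 : Fin 3 → ℝ) (hM0 : M0 = -Me ∨ M0 = Me) (L : ℕ) (hL : 1 ≤ L) :
    (∀ T1a T2a T1b T2b : ℝ, 0 < T1a → 0 < T2a → 0 < T1b → 0 < T2b →
        Mseq α φ TR T1a T2a M0 1 = Mseq α φ TR T1b T2b M0 1 →
        (T1a, T2a) = (T1b, T2b))
    ∧ (∀ T1a T2a T1b T2b : ℝ, 0 < T1a → 0 < T2a → 0 < T1b → 0 < T2b →
        (∀ ℓ ∈ Finset.Icc 1 L, Mseq α φ TR T1a T2a M0 ℓ = Mseq α φ TR T1b T2b M0 ℓ) →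
        (T1a, T2a) = (T1b, T2b)) := by
  obtain ⟨s, hs, hM0'⟩ : ∃ s : ℝ, s ^ 2 = 1 ∧ M0 = s • Me := by
    rcases hM0 with h | h
    · exact ⟨-1, by norm_num, by simpa [neg_smul, one_smul] using h⟩
    · exact ⟨1, by norm_num, by simpa using h⟩
  subst hM0'
  have hTR1 : 0 < TR 1 := hTR 1
  have hsin : 0 < Real.sin (α 1) := Real.sin_pos_of_pos_of_lt_pi (hα 1).1 (hα 1).2
  have hcos : Real.cos (α 1) ^ 2 < 1 := by
    nlinarith [Real.sin_sq_add_cos_sq (α 1)]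
  have hs0 : s ≠ 0 := by intro h; rw [h] at hs; norm_num at hs
  have key : ∀ T1a T2a T1b T2b : ℝ, 0 < T1a → 0 < T2a → 0 < T1b → 0 < T2b →
      Mseq α φ TR T1a T2a (s • Me) 1 = Mseq α φ TR T1b T2b (s • Me) 1 →
      (T1a, T2a) = (T1b, T2b) := by
    intro T1a T2a T1b T2b h1a h2a h1b h2b h
    have e0 := congrFun h 0
    have e1 := congrFun h 1
    have e2 := congrFun h 2
    rw [(Mseq1_apply TR α φ T1a T2a s).1, (Mseq1_apply TR α φ T1b T2b s).1] at e0
    rw [(Mseq1_apply TR α φ T1a T2a s).2.1, (Mseq1_apply TR α φ T1b T2b s).2.1] at e1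
    rw [(Mseq1_apply TR α φ T1a T2a s).2.2, (Mseq1_apply TR α φ T1b T2b s).2.2] at e2
    have hT1 : T1a = T1b := by
      have hc : s * Real.cos (α 1) - 1 ≠ 0 := by
        intro hc0
        nlinarith [hs, hcos, Real.neg_one_le_cos (α 1), Real.cos_le_one (α 1)]
      have hexp : Real.exp (-TR 1 / T1a) = Real.exp (-TR 1 / T1b) := by
        have : Real.exp (-TR 1 / T1a) * (s * Real.cos (α 1) - 1)
            = Real.exp (-TR 1 / T1b) * (s * Real.cos (α 1) - 1) := by linarith [e2]
        exact mul_right_cancel₀ hc this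
      have harg : -TR 1 / T1a = -TR 1 / T1b := Real.exp_injective hexp
      have hne : (-TR 1 : ℝ) ≠ 0 := neg_ne_zero.mpr (ne_of_gt hTR1)
      field_simp at harg
      linarith
    have hT2 : T2a = T2b := by
      have hcomb : s * Real.exp (-TR 1 / T2a) * Real.sin (α 1)
          = s * Real.exp (-TR 1 / T2b) * Real.sin (α 1) := by
        have h0 := congrArg (· * Real.sin (φ 1)) e0
        have h1 := congrArg (· * Real.cos (φ 1)) e1
        nlinarith [Real.sin_sq_add_cos_sq (φ 1)]
      have hexp : Real.exp (-TR 1 / T2a) = Real.exp (-TR 1 / T2b) := by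
        have h' : Real.exp (-TR 1 / T2a) * (s * Real.sin (α 1))
            = Real.exp (-TR 1 / T2b) * (s * Real.sin (α 1)) := by linarith [hcomb]
        exact mul_right_cancel₀ (by positivity) h'
      have harg : -TR 1 / T2a = -TR 1 / T2b := Real.exp_injective hexp
      field_simp at harg
      linarith
    rw [hT1, hT2]
  refine ⟨key, ?_⟩
  intro T1a T2a T1b T2b h1a h2a h1b h2b h
  exact key T1a T2a T1b T2b h1a h2a h1b h2b (h 1 (by simp [Finset.mem_Icc, hL]))
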